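/- An exterior space X is Č₀-complete if and only if the canonical map e₀ : L(X) → Ě(X) is bijective and for every x ∈ L(X) and every open U containing x, there exist E ∈ ε(X) and a q₀-saturated open subset W of E with x ∈ W ⊂ U. -/

import Mathlib

open Set Topology Filter

universe u v

/-- An externology on a topological space: a nonempty family of open subsets closed under
finite intersections and under open supersets. -/
structure Externology (X : Type u) [TopologicalSpace X] where
  sets : Set (Set X)
  nonempty' : sets.Nonempty
  isOpen' : ∀ E ∈ sets, IsOpen E
  inter' : ∀ E ∈ sets, ∀ F ∈ sets, E ∩ F ∈ sets
  superset' : ∀ E ∈ sets, ∀ U : Set X, IsOpen U → E ⊆ U → U ∈ sets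

variable {X : Type u} {Y : Type v} [TopologicalSpace X] [TopologicalSpace Y]

/-- The limit space `L(X)` of an exterior space: the intersection of all exterior open sets. -/
def Elimit (ε : Externology X) : Set X := ⋂₀ ε.sets

/-- `V` is a `q₀`-saturated open subset of `E`: an open subset of `E` which is a union of
path-components of `E`. -/
def IsQSatOpen (E V : Set X) : Prop :=
  V ⊆ E ∧ IsOpen V ∧ ∀ x ∈ V, pathComponentIn E x ⊆ V

/-- An end point of an exterior space: a compatible choice of a path-component of each
exterior open subset. -/
structure EndPt (ε : Externology X) where
  comp : Set X → Set X
  isComp' : ∀ E ∈ ε.sets, ∃ x ∈ E, comp E = pathComponentIn E x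
  mono' : ∀ E ∈ ε.sets, ∀ F ∈ ε.sets, E ⊆ F → comp E ⊆ comp F

/-- The inverse limit topology on the end space. -/
instance EndPt.instTopologicalSpace (ε : Externology X) : TopologicalSpace (EndPt ε) :=
  .generateFrom {S | ∃ E ∈ ε.sets, ∃ V : Set X, IsQSatOpen E V ∧
    S = {a : EndPt ε | a.comp E ⊆ V}}

/-- The canonical map `e₀ : L(X) → Ě(X)` sending a point of the limit space to the family
of its path-components. -/
def endOf (ε : Externology X) (x : Elimit ε) : EndPt ε where
  comp E := pathComponentIn E (x : X)
  isComp' E hE := ⟨(x : X), x.2 E hE, rfl⟩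
  mono' _E _hE _F _hF h := pathComponentIn_mono h

/-- The gluing relation of the push-out `X ∪_{L(X)} Ě(X)`. -/
inductive CompletionRel (ε : Externology X) : X ⊕ EndPt ε → X ⊕ EndPt ε → Prop
  | glue (x : Elimit ε) : CompletionRel ε (Sum.inl (x : X)) (Sum.inr (endOf ε x))

/-- The underlying set of the completion: the push-out `X ∪_{L(X)} Ě(X)`. -/
def CompletionPts (ε : Externology X) : Type u := Quot (CompletionRel ε)

/-- The canonical map `p₀ : X → X ∪_{L(X)} Ě(X)`. -/
def p0 (ε : Externology X) : X → CompletionPts ε := fun x => Quot.mk _ (Sum.inl x)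

/-- The canonical map `incl₀ : Ě(X) → X ∪_{L(X)} Ě(X)`. -/
def incl0 (ε : Externology X) : EndPt ε → CompletionPts ε := fun a => Quot.mk _ (Sum.inr a)

/-- The family `𝒢₀` of subsets of the push-out `X ∪_{L(X)} Ě(X)`: `W ∈ 𝒢₀` iff `p₀⁻¹ W` is
open in `X`, `incl₀⁻¹ W` is open in `Ě(X)`, and each end `a ∈ incl₀⁻¹ W` admits `E ∈ ε(X)`
and an open `G ⊆ π₀(E)` (encoded by the saturated open set `V = q₀⁻¹ G ⊆ E`) with
`a ∈ η₀⁻¹ G ⊆ incl₀⁻¹ W` and `q₀⁻¹ G ⊆ p₀⁻¹ W`. -/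
def G0 (ε : Externology X) : Set (Set (CompletionPts ε)) :=
  {W | IsOpen (p0 ε ⁻¹' W) ∧ IsOpen {a : EndPt ε | incl0 ε a ∈ W} ∧
    ∀ a : EndPt ε, incl0 ε a ∈ W →
      ∃ E ∈ ε.sets, ∃ V : Set X, IsQSatOpen E V ∧ a.comp E ⊆ V ∧
        (∀ b : EndPt ε, b.comp E ⊆ V → incl0 ε b ∈ W) ∧ ∀ x ∈ V, p0 ε x ∈ W}

/-- The topology `𝒢₀` on the completion. -/
instance CompletionPts.instTopologicalSpace (ε : Externology X) :
    TopologicalSpace (CompletionPts ε) := .generateFrom (G0 ε)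

/-- The basic exterior subset `W₀(E) = p₀(E) ∪ incl₀(Ě(X))` of the completion. -/
def W0 (ε : Externology X) (E : Set X) : Set (CompletionPts ε) :=
  p0 ε '' E ∪ Set.range (incl0 ε)

lemma W0_mono (ε : Externology X) {E F : Set X} (h : E ⊆ F) : W0 ε E ⊆ W0 ε F :=
  union_subset_union_left _ (image_mono h)

/-- The externology of the completion `Č₀(X)`, with base `{W₀(E) | E ∈ ε(X)}`. -/
def completionExternology (ε : Externology X) : Externology (CompletionPts ε) where
  sets := {U | IsOpen U ∧ ∃ E ∈ ε.sets, W0 ε E ⊆ U}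
  nonempty' := by
    obtain ⟨E, hE⟩ := ε.nonempty'
    exact ⟨univ, isOpen_univ, E, hE, subset_univ _⟩
  isOpen' := fun U hU => hU.1
  inter' := by
    rintro U ⟨hUo, E, hE, hEU⟩ V ⟨hVo, F, hF, hFV⟩
    refine ⟨hUo.inter hVo, E ∩ F, ε.inter' E hE F hF, ?_⟩
    exact subset_inter ((W0_mono ε inter_subset_left).trans hEU)
      ((W0_mono ε inter_subset_right).trans hFV)
  superset' := by
    rintro U ⟨hUo, E, hE, hEU⟩ V hVo hUV
    exact ⟨hVo, E, hE, hEU.trans hUV⟩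

/-- An exterior map between exterior spaces. -/
def IsExteriorMap (εX : Externology X) (εY : Externology Y) (f : X → Y) : Prop :=
  Continuous f ∧ ∀ E ∈ εY.sets, f ⁻¹' E ∈ εX.sets

/-- An isomorphism of exterior spaces. -/
def IsExteriorIso (εX : Externology X) (εY : Externology Y) (f : X → Y) : Prop :=
  IsExteriorMap εX εY f ∧ ∃ g : Y → X, IsExteriorMap εY εX g ∧ g ∘ f = id ∧ f ∘ g = id

/-- An exterior space is `Č₀`-complete if the canonical map `p₀ : X → Č₀(X)` is an
isomorphism of exterior spaces. -/
def C0Complete (ε : Externology X) : Prop :=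
  IsExteriorIso ε (completionExternology ε) (p0 ε)

/-- A `π₀`-`ε(X)`-net: a net eventually contained in a single path-component of every
exterior open set. -/
def IsPi0Net {D : Type*} [Preorder D] (ε : Externology X) (u : D → X) : Prop :=
  ∀ E ∈ ε.sets, ∃ C : Set X, (∃ y ∈ E, C = pathComponentIn E y) ∧ ∀ᶠ δ in atTop, u δ ∈ C

/-- The `r`-exterior externology of a flow: open sets absorbing every positive
semi-trajectory. -/
def rExt (φ : Flow ℝ X) : Externology X where
  sets := {N | IsOpen N ∧ ∀ x : X, ∃ r₀ : ℝ, ∀ t : ℝ, r₀ < t → φ t x ∈ N}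
  nonempty' := ⟨univ, isOpen_univ, fun _ => ⟨0, fun _ _ => mem_univ _⟩⟩
  isOpen' := fun _ hN => hN.1
  inter' := by
    rintro N ⟨hNo, hN⟩ M ⟨hMo, hM⟩
    refine ⟨hNo.inter hMo, fun x => ?_⟩
    obtain ⟨r, hr⟩ := hN x
    obtain ⟨s, hs⟩ := hM x
    exact ⟨max r s, fun t ht =>
      ⟨hr t ((le_max_left r s).trans_lt ht), hs t ((le_max_right r s).trans_lt ht)⟩⟩
  superset' := by
    rintro N ⟨_, hN⟩ U hUo hNU
    exact ⟨hUo, fun x => (hN x).imp fun r h t ht => hNU (h t ht)⟩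

/-- The `ω^r`-limit set of a point for a flow. -/
def omegaR (φ : Flow ℝ X) (x : X) : Set X :=
  ⋂ t : ℝ, closure ((fun s : ℝ => φ s x) '' Ici t)

/-- The set of critical (rest) points of a flow. -/
def criticalSet (φ : Flow ℝ X) : Set X := {x | ∀ r : ℝ, φ r x = x}

/-- The set of periodic points of a flow. -/
def periodicSet (φ : Flow ℝ X) : Set X := {x | ∃ r : ℝ, r ≠ 0 ∧ φ r x = x}

/-- The global `Ω^r`-limit of a flow. -/
def OmegaRSet (φ : Flow ℝ X) : Set X := ⋃ x : X, omegaR φ x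

/-- The compatibility conditions making an exterior space with a flow an `r`-exterior flow:
`φ : ℝ^r ×̄ M_d → M` is exterior and each `F_t : M ×̄ I → M`, `F_t(x,s) = φ(ts, x)`,
is exterior. -/
structure IsRExteriorFlow (ε : Externology X) (φ : Flow ℝ X) : Prop where
  absorb : ∀ E ∈ ε.sets, ∀ x : X, ∃ r₀ : ℝ, ∀ t : ℝ, r₀ < t → φ t x ∈ E
  homotopyExt : ∀ t : ℝ, ∀ E ∈ ε.sets, ∃ G ∈ ε.sets, ∀ x ∈ G, ∀ s ∈ Icc (0:ℝ) 1,
    φ (t * s) x ∈ E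


section Aux

open Classical

lemma EndPt.comp_subset {ε : Externology X} (a : EndPt ε) {E : Set X} (hE : E ∈ ε.sets) :
    a.comp E ⊆ E := by
  obtain ⟨y, _, hc⟩ := a.isComp' E hE
  rw [hc]; exact pathComponentIn_subset

/-- Normalization map used to analyze the quotient. -/
noncomputable def normMap (ε : Externology X) : X ⊕ EndPt ε → X ⊕ EndPt ε :=
  Sum.elim
    (fun x => if h : x ∈ Elimit ε then Sum.inr (endOf ε ⟨x, h⟩) else Sum.inl x)
    Sum.inr

noncomputable def normQ (ε : Externology X) : CompletionPts ε → X ⊕ EndPt ε :=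
  Quot.lift (normMap ε) (by
    rintro _ _ ⟨x⟩
    show (if h : (x : X) ∈ Elimit ε then Sum.inr (endOf ε ⟨(x : X), h⟩)
      else Sum.inl (x : X)) = Sum.inr (endOf ε x)
    rw [dif_pos x.2])

lemma p0_eq_incl0 {ε : Externology X} {x : X} {a : EndPt ε}
    (h : p0 ε x = incl0 ε a) : ∃ hx : x ∈ Elimit ε, endOf ε ⟨x, hx⟩ = a := by
  have h2 : (if hx : x ∈ Elimit ε then Sum.inr (endOf ε ⟨x, hx⟩) else Sum.inl x)
      = Sum.inr a := congrArg (normQ ε) h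
  by_cases hx : x ∈ Elimit ε
  · rw [dif_pos hx] at h2
    exact ⟨hx, Sum.inr.inj h2⟩
  · rw [dif_neg hx] at h2
    exact absurd h2 (by simp)

lemma p0_glue (ε : Externology X) (x : Elimit ε) :
    p0 ε (x : X) = incl0 ε (endOf ε x) := Quot.sound (CompletionRel.glue x)

lemma continuous_p0 (ε : Externology X) : Continuous (p0 ε) := by
  rw [continuous_def]
  intro s hs
  have hs' : TopologicalSpace.GenerateOpen (G0 ε) s := hs
  clear hs
  induction hs' with
  | basic s hsb => exact hsb.1
  | univ => exact isOpen_univ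
  | inter s t _ _ ih1 ih2 => exact ih1.inter ih2
  | sUnion S _ ih =>
    rw [preimage_sUnion]; exact isOpen_biUnion fun t ht => ih t ht

/-- Key lemma: any open set of the completion containing an end point contains a
basic saturated neighborhood of it. -/
lemma key_open {ε : Externology X} {W : Set (CompletionPts ε)} (hW : IsOpen W) :
    ∀ a : EndPt ε, incl0 ε a ∈ W →
      ∃ E ∈ ε.sets, ∃ V : Set X, IsQSatOpen E V ∧ a.comp E ⊆ V ∧
        ∀ x ∈ V, p0 ε x ∈ W := by
  have hW' : TopologicalSpace.GenerateOpen (G0 ε) W := hW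
  clear hW
  induction hW' with
  | basic s hsb =>
    intro a ha
    obtain ⟨E, hE, V, hV, haV, _, hxV⟩ := hsb.2.2 a ha
    exact ⟨E, hE, V, hV, haV, hxV⟩
  | univ =>
    intro a _
    obtain ⟨E, hE⟩ := ε.nonempty'
    exact ⟨E, hE, E, ⟨subset_rfl, ε.isOpen' E hE, fun x _ => pathComponentIn_subset⟩,
      a.comp_subset hE, fun _ _ => mem_univ _⟩
  | inter s t _ _ ih1 ih2 =>
    intro a ha
    obtain ⟨E1, hE1, V1, hV1, haV1, hx1⟩ := ih1 a ha.1
    obtain ⟨E2, hE2, V2, hV2, haV2, hx2⟩ := ih2 a ha.2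
    have hE : E1 ∩ E2 ∈ ε.sets := ε.inter' E1 hE1 E2 hE2
    refine ⟨E1 ∩ E2, hE, V1 ∩ V2 ∩ (E1 ∩ E2), ⟨inter_subset_right,
      (hV1.2.1.inter hV2.2.1).inter (ε.isOpen' _ hE), ?_⟩, ?_, ?_⟩
    · intro x hx
      refine subset_inter (subset_inter ?_ ?_) ?_
      · exact (pathComponentIn_mono inter_subset_left).trans (hV1.2.2 x hx.1.1)
      · exact (pathComponentIn_mono inter_subset_right).trans (hV2.2.2 x hx.1.2)
      · exact pathComponentIn_subset
    · refine subset_inter (subset_inter ?_ ?_) (a.comp_subset hE)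
      · exact (a.mono' _ hE _ hE1 inter_subset_left).trans haV1
      · exact (a.mono' _ hE _ hE2 inter_subset_right).trans haV2
    · exact fun x hx => ⟨hx1 x hx.1.1, hx2 x hx.1.2⟩
  | sUnion S _ ih =>
    intro a ha
    obtain ⟨s, hsS, has⟩ := ha
    obtain ⟨E, hE, V, hV, haV, hx⟩ := ih s hsS a has
    exact ⟨E, hE, V, hV, haV, fun x hxV => ⟨s, hsS, hx x hxV⟩⟩

end Aux

/-- `X` is `Č₀`-complete iff `e₀ : L(X) → Ě(X)` is bijective and every point
of `L(X)` has arbitrarily small `q₀`-saturated open neighborhoods inside exterior sets. -/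
theorem stmt_8 (ε : Externology X) :
    C0Complete ε ↔
      (Function.Bijective (endOf ε) ∧
        ∀ x : Elimit ε, ∀ U : Set X, IsOpen U → (x : X) ∈ U →
          ∃ E ∈ ε.sets, ∃ W : Set X, IsQSatOpen E W ∧ (x : X) ∈ W ∧ W ⊆ U) := by
  constructor
  · rintro ⟨⟨hp0c, _⟩, g, ⟨hgc, _⟩, hgp, hpg⟩
    have hgp' : ∀ x : X, g (p0 ε x) = x := fun x => congrFun hgp x
    have hpg' : ∀ w, p0 ε (g w) = w := fun w => congrFun hpg w
    constructor
    · constructor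
      · intro x y hxy
        have : p0 ε (x : X) = p0 ε (y : X) := by
          rw [p0_glue ε x, p0_glue ε y, hxy]
        have := congrArg g this
        rw [hgp' (x : X), hgp' (y : X)] at this
        exact Subtype.ext this
      · intro a
        have h1 : p0 ε (g (incl0 ε a)) = incl0 ε a := hpg' _
        obtain ⟨hx, hend⟩ := p0_eq_incl0 h1
        exact ⟨⟨g (incl0 ε a), hx⟩, hend⟩
    · intro x U hU hxU
      have hWopen : IsOpen (g ⁻¹' U) := hgc.isOpen_preimage U hU
      have hmem : incl0 ε (endOf ε x) ∈ g ⁻¹' U := by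
        rw [← p0_glue ε x]
        show g (p0 ε (x : X)) ∈ U
        rw [hgp']; exact hxU
      obtain ⟨E, hE, V, hV, haV, hxV⟩ := key_open hWopen (endOf ε x) hmem
      refine ⟨E, hE, V, hV, ?_, ?_⟩
      · exact haV (mem_pathComponentIn_self (x.2 E hE))
      · intro y hy
        have := hxV y hy
        rwa [mem_preimage, hgp'] at this
  · rintro ⟨hbij, hnbhd⟩
    set einv : EndPt ε → Elimit ε := ⇑(Equiv.ofBijective (endOf ε) hbij).symm with heinv
    have hright : ∀ a, endOf ε (einv a) = a := fun a =>
      (Equiv.ofBijective (endOf ε) hbij).apply_symm_apply a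
    have hleft : ∀ x, einv (endOf ε x) = x := fun x =>
      (Equiv.ofBijective (endOf ε) hbij).symm_apply_apply x
    set g : CompletionPts ε → X := Quot.lift (Sum.elim id (fun a => ((einv a : Elimit ε) : X)))
      (by
        rintro _ _ ⟨x⟩
        show (x : X) = ((einv (endOf ε x) : Elimit ε) : X)
        rw [hleft]) with hg
    have hgp0 : ∀ x : X, g (p0 ε x) = x := fun x => rfl
    have hgincl : ∀ a, g (incl0 ε a) = ((einv a : Elimit ε) : X) := fun a => rfl
    have hp0g : ∀ w, p0 ε (g w) = w := by
      intro w
      induction w using Quot.ind with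
      | _ u =>
        cases u with
        | inl x => rfl
        | inr a =>
          show p0 ε ((einv a : Elimit ε) : X) = incl0 ε a
          rw [p0_glue ε (einv a), hright]
    -- continuity of g
    have hgc : Continuous g := by
      rw [continuous_def]
      intro U hU
      refine TopologicalSpace.GenerateOpen.basic _ ⟨?_, ?_, ?_⟩
      · have : p0 ε ⁻¹' (g ⁻¹' U) = U := by
          ext x; simp [hgp0]
        rw [this]; exact hU
      · -- {a | incl0 a ∈ g⁻¹ U} is open in EndPt
        rw [isOpen_iff_forall_mem_open]
        intro a ha
        have haU : ((einv a : Elimit ε) : X) ∈ U := ha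
        obtain ⟨E, hE, V, hV, hxV, hVU⟩ := hnbhd (einv a) U hU haU
        refine ⟨{b : EndPt ε | b.comp E ⊆ V}, ?_, ?_, ?_⟩
        · intro b hb
          show ((einv b : Elimit ε) : X) ∈ U
          have hbE : (endOf ε (einv b)).comp E ⊆ V := by rw [hright]; exact hb
          have : ((einv b : Elimit ε) : X) ∈ pathComponentIn E ((einv b : Elimit ε) : X) :=
            mem_pathComponentIn_self ((einv b).2 E hE)
          exact hVU (hbE this)
        · exact TopologicalSpace.GenerateOpen.basic _ ⟨E, hE, V, hV, rfl⟩
        · show (a.comp E) ⊆ V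
          have : (endOf ε (einv a)).comp E ⊆ V := by
            show pathComponentIn E ((einv a : Elimit ε) : X) ⊆ V
            exact hV.2.2 _ hxV
          rwa [hright] at this
      · intro a ha
        have haU : ((einv a : Elimit ε) : X) ∈ U := ha
        obtain ⟨E, hE, V, hV, hxV, hVU⟩ := hnbhd (einv a) U hU haU
        refine ⟨E, hE, V, hV, ?_, ?_, ?_⟩
        · have : (endOf ε (einv a)).comp E ⊆ V := by
            show pathComponentIn E ((einv a : Elimit ε) : X) ⊆ V
            exact hV.2.2 _ hxV
          rwa [hright] at this
        · intro b hb
          show ((einv b : Elimit ε) : X) ∈ U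
          have hbE : (endOf ε (einv b)).comp E ⊆ V := by rw [hright]; exact hb
          exact hVU (hbE (mem_pathComponentIn_self ((einv b).2 E hE)))
        · intro x hx
          show g (p0 ε x) ∈ U
          rw [hgp0]; exact hVU hx
    refine ⟨⟨continuous_p0 ε, ?_⟩, g, ⟨hgc, ?_⟩, funext hgp0, funext hp0g⟩
    · rintro E ⟨hEo, F, hF, hFE⟩
      refine ε.superset' F hF _ ((continuous_p0 ε).isOpen_preimage E hEo) ?_
      intro x hx
      exact hFE (Or.inl ⟨x, hx, rfl⟩)
    · intro E hE
      refine ⟨hgc.isOpen_preimage E (ε.isOpen' E hE), E, hE, ?_⟩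
      rintro w (⟨x, hx, rfl⟩ | ⟨a, rfl⟩)
      · show g (p0 ε x) ∈ E
        rw [hgp0]; exact hx
      · show ((einv a : Elimit ε) : X) ∈ E
        exact (einv a).2 E hE
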